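/- arXiv:1305.4515 — 9 statements merged into one kernel-verified Lean document; each statement's English description precedes it below -/
import Mathlib

section
/- Let G be an abelian topological group, H a precompact subgroup of G such that the quotient group G/H is locally precompact. Then G is locally precompact. -/
/-- A subset `S` of a topological abelian group is precompact if for every neighborhood `V`
of `0` there is a finite set `F` with `S ⊆ F + V`. -/
def AddPrecompact {G : Type*} [AddCommGroup G] [TopologicalSpace G] (S : Set G) : Prop :=
  ∀ V ∈ nhds (0 : G), ∃ F : Finset G, ∀ s ∈ S, ∃ f ∈ F, s - f ∈ V

theorem stmt0 {G : Type*} [AddCommGroup G] [TopologicalSpace G] [IsTopologicalAddGroup G]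
    (H : AddSubgroup G) (hH : AddPrecompact (H : Set G))
    (hq : ∃ U ∈ nhds (0 : G ⧸ H), AddPrecompact U) :
    ∃ U ∈ nhds (0 : G), AddPrecompact U := by
  obtain ⟨U, hU, hUpc⟩ := hq
  refine ⟨(QuotientAddGroup.mk : G → G ⧸ H) ⁻¹' U, ?_, ?_⟩
  · exact continuous_quotient_mk'.continuousAt.preimage_mem_nhds (by exact hU)
  · classical
    intro V hV
    obtain ⟨V', hV', hVV⟩ := exists_nhds_zero_half hV
    obtain ⟨FH, hFH⟩ := hH V' hV'
    have hopen : IsOpenMap (QuotientAddGroup.mk : G → G ⧸ H) :=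
      fun s hs => QuotientAddGroup.isOpenMap_coe _ hs
    have hV'img : ((QuotientAddGroup.mk : G → G ⧸ H) '' V') ∈ nhds (0 : G ⧸ H) := by
      simpa using hopen.image_mem_nhds hV'
    obtain ⟨FQ, hFQ⟩ := hUpc _ hV'img
    refine ⟨(FQ ×ˢ FH).image (fun p => p.1.out + p.2), ?_⟩
    intro w hw
    obtain ⟨f, hf, hfw⟩ := hFQ _ hw
    obtain ⟨v', hv', hveq⟩ := hfw
    have hout : (QuotientAddGroup.mk f.out : G ⧸ H) = f := QuotientAddGroup.out_eq' f
    have hHm : w - f.out - v' ∈ H := by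
      rw [← QuotientAddGroup.eq_zero_iff, QuotientAddGroup.mk_sub, QuotientAddGroup.mk_sub,
        hout, hveq]
      abel
    obtain ⟨e, he, hhe⟩ := hFH _ hHm
    refine ⟨f.out + e, Finset.mem_image.2 ⟨(f, e), Finset.mem_product.2 ⟨hf, he⟩, rfl⟩, ?_⟩
    have : w - (f.out + e) = v' + (w - f.out - v' - e) := by abel
    rw [this]
    exact hVV _ hv' _ hhe
end

section
/- Let K be a compact subgroup of a Hausdorff topological abelian group X. If the continuous characters of X separate the points of K, then every continuous character of K extends to a continuous character of X. -/
noncomputable section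
open MeasureTheory Complex

/-- The circle group `𝕋 = ℝ/ℤ`. -/
abbrev 𝕋 := AddCircle (1 : ℝ)

instance : Fact ((0 : ℝ) < 1) := ⟨one_pos⟩

/-- `⟨t⟩`: the unique representative of `t` in the interval `(-1/2, 1/2]`. -/
def torusArg (t : 𝕋) : ℝ := (AddCircle.equivIoc 1 (-(1/2)) t : ℝ)

/-- `θ(t) = |⟨t⟩|`, the norm of `t ∈ 𝕋`. -/
def torusNorm (t : 𝕋) : ℝ := |torusArg t|

/-- `T_β = {t ∈ 𝕋 : θ(t) ≤ β}`. -/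
def Tset (β : ℝ) : Set 𝕋 := {t | torusNorm t ≤ β}

/-- embed 𝕋 in ℂ -/
def tC (t : 𝕋) : ℂ := (AddCircle.toCircle t : ℂ)

lemma tC_add (s t : 𝕋) : tC (s + t) = tC s * tC t := by
  simp [tC, AddCircle.toCircle_add]

lemma tC_zero : tC 0 = 1 := by simp [tC]

lemma tC_cont : Continuous tC :=
  continuous_subtype_val.comp AddCircle.continuous_toCircle

lemma tC_inj : Function.Injective tC :=
  fun a b h => AddCircle.injective_toCircle one_ne_zero (Subtype.coe_injective h)

lemma tC_norm (t : 𝕋) : ‖tC t‖ = 1 := by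
  simpa [tC] using Circle.norm_coe (AddCircle.toCircle t)

lemma toCircle_neg' (t : 𝕋) : AddCircle.toCircle (-t) = (AddCircle.toCircle t)⁻¹ := by
  apply eq_inv_of_mul_eq_one_left
  rw [← AddCircle.toCircle_add, neg_add_cancel, AddCircle.toCircle_zero]

lemma tC_conj (t : 𝕋) : (starRingEnd ℂ) (tC t) = tC (-t) := by
  rw [show tC (-t) = (AddCircle.toCircle (-t) : ℂ) from rfl, toCircle_neg',
    Circle.coe_inv_eq_conj]; rfl

lemma char_integral_eq_zero {G : Type*} [AddCommGroup G] [TopologicalSpace G]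
    [IsTopologicalAddGroup G] [MeasurableSpace G] [BorelSpace G] (μ : Measure G)
    [μ.IsAddLeftInvariant] (ψ : G →+ 𝕋) (hnt : ∃ g, ψ g ≠ 0) :
    ∫ x, tC (ψ x) ∂μ = 0 := by
  obtain ⟨g, hg⟩ := hnt
  have key : ∫ x, tC (ψ (g + x)) ∂μ = ∫ x, tC (ψ x) ∂μ :=
    integral_add_left_eq_self (fun x => tC (ψ x)) g
  simp only [map_add, tC_add, integral_const_mul] at key
  have hne : tC (ψ g) ≠ 1 := fun h => hg (tC_inj (h.trans tC_zero.symm))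
  have := sub_eq_zero.mpr key
  rw [← sub_one_mul] at this
  rcases mul_eq_zero.mp this with h | h
  · exact (hne (sub_eq_zero.mp h)).elim
  · exact h


theorem stmt2 {X : Type*} [AddCommGroup X] [TopologicalSpace X] [IsTopologicalAddGroup X]
    [T2Space X] (K : AddSubgroup X) (hK : IsCompact (K : Set X))
    (hsep : ∀ x ∈ K, x ≠ 0 → ∃ χ : X →+ 𝕋, Continuous χ ∧ χ x ≠ 0)
    (χ : K →+ 𝕋) (hχ : Continuous χ) :
    ∃ χ' : X →+ 𝕋, Continuous χ' ∧ ∀ k : K, χ' k = χ k := by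
  by_contra hcon
  push_neg at hcon
  letI : MeasurableSpace K := borel K
  haveI : BorelSpace K := ⟨rfl⟩
  haveI : CompactSpace K := isCompact_iff_compactSpace.mp hK
  set μ : Measure K := MeasureTheory.Measure.addHaar with hμ
  have hint : ∀ {f : K → ℂ}, Continuous f → Integrable f μ := fun hf =>
    hf.integrable_of_hasCompactSupport (HasCompactSupport.of_compactSpace _)
  -- the set of restrictions of continuous characters of `X`, as continuous maps to `ℂ`
  set s : Set C(K, ℂ) :=
    {f | ∃ χ' : X →+ 𝕋, Continuous χ' ∧ (f : K → ℂ) = fun k : K.1 => tC (χ' (k : X))} with hs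
  set A : StarSubalgebra ℂ C(K, ℂ) := StarAlgebra.adjoin ℂ s with hA
  -- `A` separates points
  have hsepA : A.SeparatesPoints := by
    intro k1 k2 hne
    have hx : ((k1 : X) - k2) ∈ K := sub_mem k1.2 k2.2
    have hx0 : ((k1 : X) - k2) ≠ 0 := sub_ne_zero.mpr (fun h => hne (Subtype.ext h))
    obtain ⟨χ₀, hc, hχ₀⟩ := hsep _ hx hx0
    refine ⟨fun k => tC (χ₀ k), ⟨⟨fun k => tC (χ₀ k),
      tC_cont.comp (hc.comp continuous_subtype_val)⟩,
      StarAlgebra.subset_adjoin ℂ s ⟨χ₀, hc, rfl⟩, rfl⟩, ?_⟩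
    intro h
    apply hχ₀
    have : χ₀ (k1 : X) = χ₀ (k2 : X) := tC_inj h
    rw [map_sub, this, sub_self]
  have hdense := ContinuousMap.starSubalgebra_topologicalClosure_eq_top_of_separatesPoints A hsepA
  -- the linear functional `f ↦ ∫ conj (tC (χ k)) * f k`
  let L : C(K, ℂ) →ₗ[ℂ] ℂ :=
    { toFun := fun f => ∫ k, tC (-(χ k)) * f k ∂μ
      map_add' := by
        intro f g
        rw [← integral_add]
        · simp [mul_add]
        · exact hint ((tC_cont.comp (hχ.neg)).mul f.continuous)
        · exact hint ((tC_cont.comp (hχ.neg)).mul g.continuous)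
      map_smul' := by
        intro c f
        simp only [ContinuousMap.coe_smul, Pi.smul_apply, smul_eq_mul, RingHom.id_apply]
        rw [← integral_const_mul]
        congr 1; ext k; ring }
  -- `L` is continuous
  have hLcont : Continuous L := by
    apply AddMonoidHomClass.continuous_of_bound L ((μ Set.univ).toReal)
    intro f
    calc ‖L f‖ ≤ ∫ k, ‖tC (-(χ k)) * f k‖ ∂μ := norm_integral_le_integral_norm _
    _ = ∫ k, ‖f k‖ ∂μ := by
        congr 1; funext k; rw [norm_mul, tC_norm, one_mul]
    _ ≤ ∫ _, ‖f‖ ∂μ := by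
        apply integral_mono (f.continuous.norm.integrable_of_hasCompactSupport
          (HasCompactSupport.of_compactSpace _)) (integrable_const _)
        intro k; exact f.norm_coe_le_norm k
    _ = (μ Set.univ).toReal * ‖f‖ := by rw [integral_const, smul_eq_mul, measureReal_def]
  -- `L` vanishes on `s`
  have hLs : ∀ f ∈ s, L f = 0 := by
    rintro f ⟨χ', hc, hf⟩
    have hψ : ∃ k : K, ((χ'.comp K.subtype) - χ) k ≠ 0 := by
      obtain ⟨k, hk⟩ := hcon χ' hc
      exact ⟨k, sub_ne_zero.mpr hk⟩
    have horth := char_integral_eq_zero μ ((χ'.comp K.subtype) - χ) hψ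
    have hpt : ∀ k : K, tC (-(χ k)) * f k = tC (((χ'.comp K.subtype) - χ) k) := by
      intro k
      rw [congrFun hf k, AddMonoidHom.sub_apply, sub_eq_add_neg, tC_add, mul_comm]
      rfl
    show (∫ k, tC (-(χ k)) * f k ∂μ) = 0
    simp only [hpt]
    exact horth
  -- `A` is contained in the span of `s`
  have hspan : (A : Set C(K, ℂ)) ⊆ (Submodule.span ℂ s : Set C(K, ℂ)) := by
    have hss : s ∪ star s = s := by
      apply Set.union_eq_self_of_subset_right
      intro f hf
      rw [Set.mem_star] at hf
      obtain ⟨χ', hc, hg⟩ := hf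
      refine ⟨-χ', hc.neg, ?_⟩
      funext k
      have h1 : (starRingEnd ℂ) (f k) = tC (χ' (k : X)) := by
        rw [show (starRingEnd ℂ) (f k) = (star f) k from rfl, congrFun hg k]
      have : f k = (starRingEnd ℂ) (tC (χ' (k : X))) := by
        rw [← h1, Complex.conj_conj]
      rw [this, tC_conj]
      rfl
    have h1 : (1 : C(K, ℂ)) ∈ s := by
      refine ⟨0, continuous_const, ?_⟩
      funext k; show (1 : ℂ) = tC 0; rw [tC_zero]
    have hmul : ∀ f ∈ s, ∀ g ∈ s, f * g ∈ s := by
      rintro f ⟨χ₁, hc₁, hf⟩ g ⟨χ₂, hc₂, hg⟩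
      refine ⟨χ₁ + χ₂, hc₁.add hc₂, ?_⟩
      funext k
      show f k * g k = tC ((χ₁ + χ₂) (k : X))
      rw [congrFun hf k, congrFun hg k, AddMonoidHom.add_apply, tC_add]
    let M : Submonoid C(K, ℂ) :=
      { carrier := s
        mul_mem' := fun ha hb => hmul _ ha _ hb
        one_mem' := h1 }
    have hcl : (Submonoid.closure (s ∪ star s) : Set C(K, ℂ)) = s := by
      rw [hss, show s = (M : Set C(K, ℂ)) from rfl, Submonoid.closure_eq]
    intro f hf
    have hf' : f ∈ Subalgebra.toSubmodule (StarAlgebra.adjoin ℂ s).toSubalgebra := hf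
    rw [StarAlgebra.adjoin_eq_span] at hf'
    have : Submodule.span ℂ ((Submonoid.closure (s ∪ star s) : Set C(K, ℂ)))
        = Submodule.span ℂ s := by rw [hcl]
    rw [this] at hf'
    exact hf'
  -- the character of `K` as a continuous map
  let Fχ : C(K, ℂ) := ⟨fun k => tC (χ k), tC_cont.comp hχ⟩
  have hFmem : Fχ ∈ closure (Submodule.span ℂ s : Set C(K, ℂ)) := by
    have h1 : Fχ ∈ A.topologicalClosure := by rw [hdense]; trivial
    exact closure_mono hspan h1
  have hLF : L Fχ = 0 := by
    have hclosed : IsClosed {f : C(K, ℂ) | L f = 0} :=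
      isClosed_eq hLcont continuous_const
    have hsub : (Submodule.span ℂ s : Set C(K, ℂ)) ⊆ {f : C(K, ℂ) | L f = 0} := by
      have : s ⊆ (LinearMap.ker L : Set C(K, ℂ)) := fun f hf => hLs f hf
      exact fun f hf => (Submodule.span_le.mpr this) hf
    exact hclosed.closure_subset_iff.mpr hsub hFmem
  -- But `L Fχ = μ(K) ≠ 0`
  have hval : L Fχ = (μ Set.univ).toReal := by
    have hpt : ∀ k : K, tC (-(χ k)) * Fχ k = 1 := by
      intro k
      show tC (-(χ k)) * tC (χ k) = 1
      rw [← tC_add, neg_add_cancel, tC_zero]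
    show (∫ k, tC (-(χ k)) * Fχ k ∂μ) = _
    simp only [hpt]
    simp [integral_const, measureReal_def]
  have hpos : (0 : ℝ) < (μ Set.univ).toReal :=
    ENNReal.toReal_pos (isOpen_univ.measure_pos μ ⟨⟨0, K.zero_mem⟩, trivial⟩).ne'
      (measure_ne_top μ _)
  rw [hval, Complex.ofReal_eq_zero] at hLF
  exact hpos.ne' hLF
end
end

section
/- Let 0 → 𝕋 →ι X →π G → 0 be a short exact sequence of topological abelian groups (ι an embedding onto ker π, π continuous open surjective). The sequence splits (admits a continuous homomorphism P: X → 𝕋 with P ∘ ι = id) if and only if the continuous characters of X separate the points of ι(𝕋). -/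
noncomputable section

lemma arg_coe (t : 𝕋) : ((torusArg t : ℝ) : 𝕋) = t :=
  (AddCircle.equivIoc 1 (-(1/2))).symm_apply_apply t

lemma abs_arg_le (t : 𝕋) : |torusArg t| ≤ 1/2 := by
  have h2 := (AddCircle.equivIoc 1 (-(1/2)) t).2
  rw [abs_le]
  obtain ⟨h3, h4⟩ := h2
  exact ⟨le_of_lt h3, by unfold torusArg; linarith⟩

lemma norm_eq_arg (t : 𝕋) : ‖t‖ = |torusArg t| := by
  conv_lhs => rw [← arg_coe t]
  exact (AddCircle.norm_coe_eq_abs_iff (1:ℝ) one_ne_zero).mpr (by simpa using abs_arg_le t)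

open Filter Topology in
lemma endo_classify (f : 𝕋 →+ 𝕋) (hf : Continuous f) : ∃ n : ℤ, ∀ z : 𝕋, f z = n • z := by
  have hq : Continuous (fun x : ℝ => (x : 𝕋)) := AddCircle.continuous_mk' 1
  have hF : Continuous (fun x : ℝ => f (x : 𝕋)) := hf.comp hq
  have h0 : f ((0:ℝ) : 𝕋) = 0 := by simp
  obtain ⟨δ, hδpos, hsmall⟩ : ∃ δ > 0, ∀ x : ℝ, |x| < δ → ‖f (x:𝕋)‖ < 1/8 := by
    obtain ⟨δ, hδpos, hδ⟩ := Metric.continuousAt_iff.mp (hF.continuousAt (x := 0)) (1/8)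
      (by norm_num)
    refine ⟨δ, hδpos, fun x hx => ?_⟩
    have := hδ (show dist x 0 < δ by simpa [Real.dist_eq] using hx)
    simpa [h0, dist_zero_right] using this
  set δ' : ℝ := δ / 2 with hδ'
  have hδ'pos : 0 < δ' := by positivity
  set a : ℕ → ℝ := fun k => torusArg (f ((δ' / 2 ^ k : ℝ) : 𝕋)) with ha
  have hcoe : ∀ k, ((a k : ℝ) : 𝕋) = f ((δ' / 2 ^ k : ℝ) : 𝕋) := fun k => arg_coe _
  have hbound : ∀ k, |a k| < 1/8 := by
    intro k
    rw [ha]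
    rw [← norm_eq_arg]
    apply hsmall
    rw [abs_of_pos (by positivity)]
    calc δ' / 2 ^ k ≤ δ' / 1 := by
          apply div_le_div_of_nonneg_left (le_of_lt hδ'pos) one_pos (one_le_pow₀ (by norm_num))
      _ = δ' := div_one _
      _ < δ := by rw [hδ']; linarith
  have hhalf : ∀ k, 2 * a (k + 1) = a k := by
    intro k
    have h2 : (2:ℤ) • ((a (k+1) : ℝ) : 𝕋) = ((2 * a (k+1) : ℝ) : 𝕋) := by
      rw [← QuotientAddGroup.mk_zsmul]; congr 1; rw [zsmul_eq_mul]; push_cast; ring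
    have h3 : (2:ℤ) • ((δ'/2^(k+1) : ℝ) : 𝕋) = ((δ'/2^k : ℝ) : 𝕋) := by
      rw [← QuotientAddGroup.mk_zsmul]; congr 1; rw [zsmul_eq_mul]; push_cast; ring
    have e1 : ((2 * a (k+1) : ℝ) : 𝕋) = ((a k : ℝ) : 𝕋) := by
      calc ((2 * a (k+1) : ℝ) : 𝕋) = (2:ℤ) • ((a (k+1) : ℝ) : 𝕋) := h2.symm
        _ = (2:ℤ) • f ((δ'/2^(k+1) : ℝ) : 𝕋) := by rw [hcoe]
        _ = f ((2:ℤ) • ((δ'/2^(k+1) : ℝ) : 𝕋)) := (map_zsmul f _ _).symm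
        _ = f ((δ'/2^k : ℝ) : 𝕋) := by rw [h3]
        _ = ((a k : ℝ) : 𝕋) := (hcoe k).symm
    have hex : ∃ n : ℤ, n • (1:ℝ) = 2 * a (k+1) - a k := by
      rw [← AddCircle.coe_eq_zero_iff, QuotientAddGroup.mk_sub, e1, sub_self]
    obtain ⟨n, hn⟩ := hex
    have hn' : |(n : ℝ)| < 1 := by
      rw [show ((n:ℝ)) = 2 * a (k+1) - a k by simpa using hn]
      have b1 := hbound (k+1); have b2 := hbound k
      rw [abs_lt] at *
      constructor <;> linarith [b1.1, b1.2, b2.1, b2.2]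
    have hn0 : n = 0 := by exact_mod_cast Int.abs_lt_one_iff.mp (by exact_mod_cast hn')
    rw [hn0, zero_zsmul] at hn
    linarith
  have hak : ∀ k, a k = a 0 / 2 ^ k := by
    intro k
    induction k with
    | zero => simp
    | succ k ih =>
      have := hhalf k
      rw [ih] at this
      rw [pow_succ]
      field_simp at this ⊢
      linear_combination this
  set c : ℝ := a 0 / δ' with hc
  have key : ∀ (m : ℤ) (k : ℕ), f ((m * (δ' / 2 ^ k) : ℝ) : 𝕋) = ((c * (m * (δ' / 2 ^ k)) : ℝ) : 𝕋) := by
    intro m k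
    have e1 : ((m * (δ' / 2 ^ k) : ℝ) : 𝕋) = m • ((δ' / 2 ^ k : ℝ) : 𝕋) := by
      rw [← QuotientAddGroup.mk_zsmul]
      congr 1
      push_cast [zsmul_eq_mul]
      ring
    rw [e1, map_zsmul, ← hcoe, ← QuotientAddGroup.mk_zsmul]
    congr 1
    rw [hak k, hc]
    push_cast [zsmul_eq_mul]
    field_simp
  have main : ∀ x : ℝ, f ((x : ℝ) : 𝕋) = ((c * x : ℝ) : 𝕋) := by
    intro x
    set s : ℕ → ℝ := fun k => (⌊x * 2 ^ k / δ'⌋ : ℤ) * (δ' / 2 ^ k) with hs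
    have hsx : Filter.Tendsto s atTop (𝓝 x) := by
      have hdist : ∀ k, ‖s k - x‖ ≤ δ' / 2 ^ k := by
        intro k
        have h2k : (0:ℝ) < 2 ^ k := by positivity
        set y : ℝ := x * 2 ^ k / δ' with hy
        have hxy : x = y * (δ' / 2 ^ k) := by rw [hy]; field_simp
        have : s k - x = ((⌊y⌋ : ℝ) - y) * (δ' / 2 ^ k) := by rw [hs]; dsimp only; rw [← hy]; linarith [hxy]
        rw [this, Real.norm_eq_abs, abs_mul, abs_of_pos (by positivity : (0:ℝ) < δ' / 2 ^ k)]
        have h1 : |(⌊y⌋ : ℝ) - y| ≤ 1 := by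
          rw [abs_le]
          constructor
          · linarith [Int.lt_floor_add_one y]
          · linarith [Int.floor_le y]
        nlinarith [le_of_lt (show (0:ℝ) < δ' / 2 ^ k by positivity)]
      have hz : Filter.Tendsto (fun k : ℕ => δ' / 2 ^ k) atTop (𝓝 0) := by
        simpa [div_eq_mul_inv, ← inv_pow] using
          (tendsto_pow_atTop_nhds_zero_of_lt_one (by norm_num : (0:ℝ) ≤ 2⁻¹)
            (by norm_num : (2:ℝ)⁻¹ < 1)).const_mul δ'
      have := squeeze_zero_norm hdist hz
      have := this.add (tendsto_const_nhds (x := x))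
      simpa using this
    have t1 : Filter.Tendsto (fun k => f ((s k : ℝ) : 𝕋)) atTop (𝓝 (f ((x:ℝ) : 𝕋))) :=
      (hF.tendsto x).comp hsx
    have t2 : Filter.Tendsto (fun k => ((c * s k : ℝ) : 𝕋)) atTop (𝓝 ((c * x : ℝ) : 𝕋)) :=
      ((hq.comp (continuous_const.mul continuous_id)).tendsto x).comp hsx
    have heq : (fun k => f ((s k : ℝ) : 𝕋)) = fun k => ((c * s k : ℝ) : 𝕋) := by
      funext k
      exact key _ k
    rw [heq] at t1
    exact tendsto_nhds_unique t1 t2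
  obtain ⟨n, hn⟩ : ∃ n : ℤ, n • (1:ℝ) = c := by
    rw [← AddCircle.coe_eq_zero_iff]
    have := main 1
    rw [mul_one] at this
    rw [← this]
    rw [show ((1:ℝ) : 𝕋) = 0 from (AddCircle.coe_eq_zero_iff (1:ℝ)).mpr ⟨1, by simp⟩, map_zero]
  refine ⟨n, fun z => ?_⟩
  induction z using QuotientAddGroup.induction_on with
  | H x =>
    rw [show (QuotientAddGroup.mk x : 𝕋) = ((x : ℝ) : 𝕋) from rfl, main x,
      ← QuotientAddGroup.mk_zsmul]
    congr 1
    rw [← hn]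
    push_cast [zsmul_eq_mul]
    ring


theorem stmt5 {X G : Type*} [AddCommGroup X] [TopologicalSpace X] [IsTopologicalAddGroup X]
    [AddCommGroup G] [TopologicalSpace G] [IsTopologicalAddGroup G]
    (ι : 𝕋 →+ X) (π : X →+ G)
    (hemb : Topology.IsEmbedding ⇑ι) (hker : ∀ x, π x = 0 ↔ x ∈ Set.range ⇑ι)
    (hπc : Continuous π) (hπo : IsOpenMap π) (hπs : Function.Surjective π) :
    (∃ P : X →+ 𝕋, Continuous P ∧ ∀ z, P (ι z) = z) ↔
      (∀ z : 𝕋, z ≠ 0 → ∃ χ : X →+ 𝕋, Continuous χ ∧ χ (ι z) ≠ 0) := by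
  constructor
  · rintro ⟨P, hPc, hP⟩ z hz
    exact ⟨P, hPc, by rw [hP]; exact hz⟩
  · intro h
    set S : AddSubgroup ℤ :=
      { carrier := {n : ℤ | ∃ χ : X →+ 𝕋, Continuous χ ∧ ∀ z, χ (ι z) = n • z}
        zero_mem' := ⟨0, by exact continuous_const, fun z => by simp⟩
        add_mem' := by
          rintro a b ⟨χ₁, hc₁, h₁⟩ ⟨χ₂, hc₂, h₂⟩
          exact ⟨χ₁ + χ₂, hc₁.add hc₂, fun z => by simp [h₁, h₂, add_zsmul]⟩
        neg_mem' := by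
          rintro a ⟨χ, hc, hχ⟩
          exact ⟨-χ, hc.neg, fun z => by simp [hχ, neg_zsmul]⟩ } with hSdef
    obtain ⟨m, hm⟩ := Int.subgroup_cyclic S
    have sep : ∀ z : 𝕋, z ≠ 0 → ∃ k : ℤ, k ∈ S ∧ k • z ≠ 0 := by
      intro z hz
      obtain ⟨χ, hχc, hχ⟩ := h z hz
      obtain ⟨n, hn⟩ := endo_classify (χ.comp ι) (hχc.comp hemb.continuous)
      refine ⟨n, ⟨χ, hχc, fun w => by simpa using hn w⟩, ?_⟩
      rw [← hn z]
      simpa using hχ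
    have hm1 : IsUnit m := by
      by_contra hmu
      rcases eq_or_ne m 0 with h0 | hne
      · have hz : ((1/2 : ℝ) : 𝕋) ≠ 0 := by
          rw [Ne, AddCircle.coe_eq_zero_iff]
          rintro ⟨n, hn⟩
          rw [zsmul_eq_mul, mul_one] at hn
          have : (2 * n : ℤ) = 1 := by exact_mod_cast (by linarith : (2:ℝ) * n = 1)
          omega
        obtain ⟨k, hk, hkz⟩ := sep _ hz
        rw [hm, h0] at hk
        obtain ⟨j, hj⟩ := AddSubgroup.mem_closure_singleton.mp hk
        apply hkz
        rw [← hj]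
        simp
      · have hmr : (m:ℝ) ≠ 0 := Int.cast_ne_zero.mpr hne
        have hz : (((m:ℝ)⁻¹ : ℝ) : 𝕋) ≠ 0 := by
          rw [Ne, AddCircle.coe_eq_zero_iff]
          rintro ⟨n, hn⟩
          rw [zsmul_eq_mul, mul_one] at hn
          have h1 : (n:ℝ) * m = 1 := by rw [hn]; field_simp
          have h2 : n * m = 1 := by exact_mod_cast h1
          exact hmu (IsUnit.of_mul_eq_one n (by rw [mul_comm]; exact h2))
        obtain ⟨k, hk, hkz⟩ := sep _ hz
        rw [hm] at hk
        obtain ⟨j, hj⟩ := AddSubgroup.mem_closure_singleton.mp hk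
        apply hkz
        have hm0 : m • (((m:ℝ)⁻¹ : ℝ) : 𝕋) = 0 := by
          rw [← QuotientAddGroup.mk_zsmul, AddCircle.coe_eq_zero_iff]
          refine ⟨1, ?_⟩
          simp only [one_smul, zsmul_eq_mul]
          field_simp
        rw [← hj, smul_eq_mul, mul_smul, hm0, smul_zero]
    have h1S : (1:ℤ) ∈ S := by
      rw [hm]
      rcases Int.isUnit_iff.mp hm1 with h' | h'
      · rw [h']; exact AddSubgroup.mem_closure_singleton.mpr ⟨1, by simp⟩
      · rw [h']; exact AddSubgroup.mem_closure_singleton.mpr ⟨-1, by simp⟩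
    obtain ⟨χ, hχc, hχ⟩ := h1S
    exact ⟨χ, hχc, fun z => by simpa using hχ z⟩
end
end

section
/- Let G be a topological abelian group whose topology is linear, i.e., has a neighborhood basis at 0 consisting of open subgroups. Then every quasi-character ω: G → 𝕋 is approximable: there exists a group homomorphism a: G → 𝕋 such that ω·a⁻¹ is continuous at 0. -/
noncomputable section

lemma coe_int_zero (k : ℤ) : ((k : ℝ) : 𝕋) = 0 := by
  rw [AddCircle.coe_eq_zero_iff]
  exact ⟨k, by simp⟩

lemma eq_zero_of_small {x : ℝ} (h : (x : 𝕋) = 0) (hx : |x| < 1) : x = 0 := by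
  rw [AddCircle.coe_eq_zero_iff] at h
  obtain ⟨n, hn⟩ := h
  simp only [zsmul_eq_mul, mul_one] at hn
  rw [← hn] at hx ⊢
  have h1 : |n| < 1 := by
    have : |(n : ℝ)| < 1 := hx
    rw [← Int.cast_abs] at this
    exact_mod_cast this
  have : n = 0 := by
    rcases abs_lt.mp h1 with ⟨h2, h3⟩
    omega
  simp [this]

lemma norm_coe_le (x : ℝ) : ‖(x : 𝕋)‖ ≤ |x| := by
  rw [AddCircle.norm_eq]
  simpa using round_le x 0

lemma norm_coe_eq {x : ℝ} (h : |x| ≤ 1/2) : ‖(x : 𝕋)‖ = |x| := by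
  rw [AddCircle.norm_eq]
  simp only [inv_one, one_mul, mul_one]
  rcases eq_or_lt_of_le (abs_le.mp h).2 with h2 | h2
  · subst h2
    norm_num [round_eq]
  · have hr : round x = 0 := by
      rw [round_eq, Int.floor_eq_zero_iff, Set.mem_Ico]
      exact ⟨by linarith [(abs_le.mp h).1], by linarith⟩
    rw [hr]
    simp

lemma exists_norm_lift (t : 𝕋) : ∃ x : ℝ, (x : 𝕋) = t ∧ |x| = ‖t‖ ∧ |x| ≤ 1/2 := by
  induction t using QuotientAddGroup.induction_on with
  | H y =>
    refine ⟨y - round y, ?_, ?_, abs_sub_round y⟩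
    · rw [AddCircle.coe_sub, coe_int_zero, sub_zero]
    · rw [AddCircle.norm_eq]
      simp

lemma norm_double {t : 𝕋} (h : ‖t‖ ≤ 1/4) : ‖t + t‖ = 2 * ‖t‖ := by
  obtain ⟨x, rfl, hx, _⟩ := exists_norm_lift t
  have h2 : |x + x| = 2 * |x| := by rw [← two_mul, abs_mul]; norm_num
  rw [← AddCircle.coe_add, norm_coe_eq (by rw [h2, hx]; linarith), h2, hx]

/-- The defect (coboundary) of a map to the circle. -/
def qd {G : Type*} [AddCommGroup G] (ω : G → 𝕋) (x y : G) : 𝕋 :=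
  ω (x + y) - ω x - ω y

theorem stmt10 {G : Type*} [AddCommGroup G] [TopologicalSpace G] [IsTopologicalAddGroup G]
    (hlin : ∀ V ∈ nhds (0 : G), ∃ U : AddSubgroup G, IsOpen (U : Set G) ∧ (U : Set G) ⊆ V)
    (ω : G → 𝕋) (hω0 : ω 0 = 0)
    (hq : ContinuousAt (fun p : G × G => ω (p.1 + p.2) - ω p.1 - ω p.2) (0, 0)) :
    ∃ a : G →+ 𝕋, ContinuousAt (fun g => ω g - a g) 0 := by
  classical
  -- Step 1: arbitrarily small defect on open subgroups
  have key : ∀ δ : ℝ, 0 < δ → ∃ U : AddSubgroup G, IsOpen (U : Set G) ∧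
      ∀ x ∈ U, ∀ y ∈ U, ‖qd ω x y‖ < δ := by
    intro δ hδ
    have h0 : (fun p : G × G => ω (p.1 + p.2) - ω p.1 - ω p.2) (0, 0) = 0 := by
      simp [hω0]
    have hball : {t : 𝕋 | ‖t‖ < δ} ∈ nhds (0 : 𝕋) := by
      have := Metric.ball_mem_nhds (0 : 𝕋) hδ
      simpa [Metric.ball, dist_eq_norm] using this
    have hpre := hq.preimage_mem_nhds (by simpa [hω0] using hball)
    rw [nhds_prod_eq, Filter.mem_prod_iff] at hpre
    obtain ⟨W1, hW1, W2, hW2, hsub⟩ := hpre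
    obtain ⟨U, hUopen, hUsub⟩ := hlin (W1 ∩ W2) (Filter.inter_mem hW1 hW2)
    refine ⟨U, hUopen, fun x hx y hy => ?_⟩
    have h2 := hsub (Set.mk_mem_prod (hUsub hx).1 (hUsub hy).2)
    simp only [Set.mem_preimage, Set.mem_setOf_eq] at h2
    simpa [qd] using h2
  obtain ⟨U, hUopen, hU⟩ := key (1/8) (by norm_num)
  -- Step 2: real lifts of the defect
  choose r hrcoe hrnorm _hrhalf using fun x y => exists_norm_lift (qd ω x y)
  have hrU : ∀ x ∈ U, ∀ y ∈ U, |r x y| ≤ 1/8 := fun x hx y hy => by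
    rw [hrnorm]; exact (hU x hx y hy).le
  -- Step 3: doubling identity for r on U
  have hkey : ∀ a b : G, a ∈ U → b ∈ U →
      r (a + a) (b + b) = 2 * r a b + (r (a + b) (a + b) - r a a - r b b) := by
    intro a b ha hb
    have hab : a + b ∈ U := U.add_mem ha hb
    have h1 : ((2 * r a b + (r (a + b) (a + b) - r a a - r b b) - r (a + a) (b + b) : ℝ) : 𝕋)
        = 0 := by
      rw [two_mul]
      rw [AddCircle.coe_sub, AddCircle.coe_add, AddCircle.coe_add, AddCircle.coe_sub,
        AddCircle.coe_sub, hrcoe, hrcoe, hrcoe, hrcoe, hrcoe]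
      simp only [qd]
      rw [(by abel : a + a + (b + b) = a + b + (a + b))]
      abel
    have hb1 := hrU a ha b hb
    have hb2 := hrU (a + b) hab (a + b) hab
    have hb3 := hrU a ha a ha
    have hb4 := hrU b hb b hb
    have hb5 := hrU (a + a) (U.add_mem ha ha) (b + b) (U.add_mem hb hb)
    rcases abs_le.mp hb1 with ⟨c1, c1'⟩
    rcases abs_le.mp hb2 with ⟨c2, c2'⟩
    rcases abs_le.mp hb3 with ⟨c3, c3'⟩
    rcases abs_le.mp hb4 with ⟨c4, c4'⟩
    rcases abs_le.mp hb5 with ⟨c5, c5'⟩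
    have h2 := eq_zero_of_small h1 (abs_lt.mpr ⟨by linarith, by linarith⟩)
    linarith
  -- Step 4: the correcting series ρ
  set ρ : G → ℝ := fun x => ∑' n : ℕ, r ((2 ^ n : ℕ) • x) ((2 ^ n : ℕ) • x) / 2 ^ (n + 1)
    with hρdef
  have hterm : ∀ x ∈ U, ∀ n : ℕ,
      |r ((2 ^ n : ℕ) • x) ((2 ^ n : ℕ) • x) / 2 ^ (n + 1)| ≤ 1/8 * (1/2) ^ n := by
    intro x hx n
    have hm : (2 ^ n : ℕ) • x ∈ U := AddSubgroup.nsmul_mem U hx _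
    rw [abs_div, abs_of_nonneg (by positivity : (0:ℝ) ≤ 2 ^ (n + 1))]
    rw [div_le_iff₀ (by positivity)]
    have h2 : ((1:ℝ)/2) ^ n * 2 ^ n = 1 := by rw [← mul_pow]; norm_num
    have h1 : (1/8 : ℝ) * (1/2) ^ n * 2 ^ (n + 1) = 1/4 := by
      rw [pow_succ]
      linear_combination (1/4 : ℝ) * h2
    rw [h1]
    linarith [hrU _ hm _ hm]
  have hgs : Summable (fun n : ℕ => (1/8 : ℝ) * (1/2) ^ n) := summable_geometric_two.mul_left _
  have hsum : ∀ x ∈ U,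
      Summable (fun n : ℕ => r ((2 ^ n : ℕ) • x) ((2 ^ n : ℕ) • x) / 2 ^ (n + 1)) := by
    intro x hx
    exact Summable.of_norm_bounded hgs fun n => by
      rw [Real.norm_eq_abs]; exact hterm x hx n
  have hρbound : ∀ x ∈ U, |ρ x| ≤ 1/4 := by
    intro x hx
    rw [hρdef]
    have := tsum_of_norm_bounded (hasSum_geometric_two.mul_left (1/8))
      (fun n => by rw [Real.norm_eq_abs]; exact hterm x hx n)
    rw [Real.norm_eq_abs] at this
    calc |∑' n : ℕ, r ((2 ^ n : ℕ) • x) ((2 ^ n : ℕ) • x) / 2 ^ (n + 1)| ≤ 1/8 * 2 := this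
      _ ≤ 1/4 := by norm_num
  -- Step 5: ρ trivializes the defect on U
  have hρadd : ∀ x ∈ U, ∀ y ∈ U, ρ (x + y) = ρ x + ρ y - r x y := by
    intro x hx y hy
    set Q : ℕ → ℝ := fun n => r ((2 ^ n : ℕ) • x) ((2 ^ n : ℕ) • y) / 2 ^ n with hQ
    have hsmul : ∀ (n : ℕ) (z : G), (2 ^ (n + 1) : ℕ) • z = (2 ^ n : ℕ) • z + (2 ^ n : ℕ) • z := by
      intro n z
      rw [pow_succ', mul_nsmul, two_nsmul, smul_add]
    have hQbound : ∀ n : ℕ, ‖Q n‖ ≤ 1/4 * (1/2) ^ n := by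
      intro n
      have hm : ∀ w, w ∈ U → (2 ^ n : ℕ) • w ∈ U := fun w hw => AddSubgroup.nsmul_mem U hw _
      rw [hQ, Real.norm_eq_abs, abs_div, abs_of_nonneg (by positivity : (0:ℝ) ≤ 2 ^ n)]
      rw [div_le_iff₀ (by positivity)]
      have h2 : ((1:ℝ)/2) ^ n * 2 ^ n = 1 := by rw [← mul_pow]; norm_num
      have h1 : (1/4 : ℝ) * (1/2) ^ n * 2 ^ n = 1/4 := by
        linear_combination (1/4 : ℝ) * h2
      rw [h1]
      linarith [hrU _ (hm x hx) _ (hm y hy)]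
    have hQdiff : ∀ n : ℕ, Q (n + 1) - Q n =
        (r ((2 ^ n : ℕ) • (x + y)) ((2 ^ n : ℕ) • (x + y))
          - r ((2 ^ n : ℕ) • x) ((2 ^ n : ℕ) • x)
          - r ((2 ^ n : ℕ) • y) ((2 ^ n : ℕ) • y)) / 2 ^ (n + 1) := by
      intro n
      have hxm : (2 ^ n : ℕ) • x ∈ U := AddSubgroup.nsmul_mem U hx _
      have hym : (2 ^ n : ℕ) • y ∈ U := AddSubgroup.nsmul_mem U hy _
      have hk := hkey _ _ hxm hym
      rw [hQ]
      simp only [smul_add, hsmul n x, hsmul n y, hk]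
      have h2 : (2 : ℝ) ^ (n + 1) ≠ 0 := by positivity
      have h3 : (2 : ℝ) ^ n ≠ 0 := by positivity
      field_simp
      ring
    have hQ0 : Filter.Tendsto Q Filter.atTop (nhds 0) := by
      apply squeeze_zero_norm hQbound
      have := (tendsto_pow_atTop_nhds_zero_of_lt_one (by norm_num : (0:ℝ) ≤ 1/2)
        (by norm_num : (1/2 : ℝ) < 1)).const_mul (1/4 : ℝ)
      simpa using this
    have hSsum : Summable fun n : ℕ => ‖Q (n + 1) - Q n‖ := by
      apply Summable.of_nonneg_of_le (fun n => norm_nonneg _)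
        (fun n => ?_) (summable_geometric_two.mul_left (1/2 : ℝ))
      calc ‖Q (n + 1) - Q n‖ ≤ ‖Q (n + 1)‖ + ‖Q n‖ := norm_sub_le _ _
        _ ≤ 1/4 * (1/2) ^ (n + 1) + 1/4 * (1/2) ^ n := add_le_add (hQbound _) (hQbound _)
        _ ≤ 1/2 * (1/2) ^ n := by
            rw [pow_succ]
            nlinarith [pow_nonneg (by norm_num : (0:ℝ) ≤ 1/2) n]
    have hS : HasSum (fun n : ℕ => Q (n + 1) - Q n) (0 - Q 0) := by
      rw [hasSum_iff_tendsto_nat_of_summable_norm hSsum]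
      have heq : (fun n : ℕ => ∑ i ∈ Finset.range n, (Q (i + 1) - Q i)) = fun n => Q n - Q 0 :=
        funext fun n => Finset.sum_range_sub Q n
      rw [heq]
      exact hQ0.sub_const _
    have hQzero : Q 0 = r x y := by
      rw [hQ]
      norm_num
    have h1 : ρ (x + y) - ρ x - ρ y = ∑' n : ℕ, (Q (n + 1) - Q n) := by
      rw [hρdef]
      rw [← Summable.tsum_sub (hsum _ (U.add_mem hx hy)) (hsum _ hx),
        ← Summable.tsum_sub ((hsum _ (U.add_mem hx hy)).sub (hsum _ hx)) (hsum _ hy)]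
      exact tsum_congr fun n => by rw [hQdiff n]; ring
    have h2 : ρ (x + y) - ρ x - ρ y = - r x y := by
      rw [h1, hS.tsum_eq, hQzero]
      ring
    linarith
  -- Step 6: the exact character on U
  have hmadd : ∀ u v : U, ω ((u + v : U) : G) + ((ρ ((u + v : U) : G) : ℝ) : 𝕋)
      = (ω u + ((ρ (u : G) : ℝ) : 𝕋)) + (ω v + ((ρ (v : G) : ℝ) : 𝕋)) := by
    intro u v
    rw [AddSubgroup.coe_add, hρadd _ u.2 _ v.2, AddCircle.coe_sub, AddCircle.coe_add, hrcoe]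
    simp only [qd]
    abel
  let χ : U →+ 𝕋 := AddMonoidHom.mk' (fun u : U => ω u + ((ρ (u : G) : ℝ) : 𝕋)) hmadd
  -- Step 7: extend to G
  have baer : Module.Baer ℤ 𝕋 := Module.Baer.of_divisible 𝕋
  obtain ⟨a, ha⟩ := baer.extension_property_addMonoidHom U.subtype Subtype.coe_injective χ
  have haU : ∀ x, ∀ hx : x ∈ U, a x = ω x + ((ρ x : ℝ) : 𝕋) := by
    intro x hx
    have := DFunLike.congr_fun ha (⟨x, hx⟩ : U)
    simpa [χ] using this
  have hclose : ∀ x ∈ U, ‖ω x - a x‖ ≤ 1/4 := by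
    intro x hx
    rw [haU x hx]
    have : ω x - (ω x + ((ρ x : ℝ) : 𝕋)) = -((ρ x : ℝ) : 𝕋) := by abel
    rw [this, norm_neg]
    exact (norm_coe_le _).trans (hρbound x hx)
  -- Step 8: continuity at 0
  refine ⟨a, ?_⟩
  have hψ0 : ω 0 - a 0 = 0 := by simp [hω0]
  rw [ContinuousAt, hψ0, NormedAddCommGroup.tendsto_nhds_zero]
  intro ε hε
  have hε' : 0 < min (ε/2) (1/8 : ℝ) := lt_min (half_pos hε) (by norm_num)
  obtain ⟨V₀, hV₀open, hV₀⟩ := key _ hε'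
  set V : AddSubgroup G := V₀ ⊓ U with hVdef
  have hVopen : IsOpen (V : Set G) := by
    rw [hVdef]
    exact hV₀open.inter hUopen
  have hVmem : (V : Set G) ∈ nhds (0 : G) := hVopen.mem_nhds V.zero_mem
  filter_upwards [hVmem] with v hv
  have hstep : ∀ n : ℕ, ∀ w, w ∈ V → ‖ω w - a w‖ ≤ 1/4 * (1/2) ^ n + min (ε/2) (1/8 : ℝ) := by
    intro n
    induction n with
    | zero =>
      intro w hw
      have := hclose w (AddSubgroup.mem_inf.mp hw).2
      simpa using this.trans (by linarith)
    | succ n ih =>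
      intro w hw
      have hwU : w ∈ U := (AddSubgroup.mem_inf.mp hw).2
      have hwV₀ : w ∈ V₀ := (AddSubgroup.mem_inf.mp hw).1
      have hww : w + w ∈ V := V.add_mem hw hw
      have hdbl : ‖(ω w - a w) + (ω w - a w)‖ = 2 * ‖ω w - a w‖ :=
        norm_double (hclose w hwU)
      have hcw : ‖qd ω w w‖ < min (ε/2) (1/8 : ℝ) := hV₀ w hwV₀ w hwV₀
      have hdiff : (ω (w + w) - a (w + w)) - ((ω w - a w) + (ω w - a w)) = qd ω w w := by
        rw [map_add]
        simp only [qd]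
        abel
      have h1 : 2 * ‖ω w - a w‖ ≤ ‖ω (w + w) - a (w + w)‖ + ‖qd ω w w‖ := by
        rw [← hdbl, ← hdiff]
        have := norm_sub_le (ω (w + w) - a (w + w))
          ((ω (w + w) - a (w + w)) - ((ω w - a w) + (ω w - a w)))
        calc ‖(ω w - a w) + (ω w - a w)‖
            = ‖(ω (w + w) - a (w + w)) - ((ω (w + w) - a (w + w))
              - ((ω w - a w) + (ω w - a w)))‖ := by rw [sub_sub_cancel]
          _ ≤ _ := this
      have h2 := ih (w + w) hww
      have h3 : (1/4 : ℝ) * (1/2) ^ (n + 1) = 1/4 * (1/2) ^ n / 2 := by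
        rw [pow_succ]; ring
      rw [h3]
      linarith
  have hlim : ‖ω v - a v‖ ≤ min (ε/2) (1/8 : ℝ) := by
    have ht : Filter.Tendsto (fun n : ℕ => (1/4 : ℝ) * (1/2) ^ n + min (ε/2) (1/8 : ℝ))
        Filter.atTop (nhds (0 + min (ε/2) (1/8 : ℝ))) := by
      exact Filter.Tendsto.add_const _ (by
        have := (tendsto_pow_atTop_nhds_zero_of_lt_one (by norm_num : (0:ℝ) ≤ 1/2)
          (by norm_num : (1/2 : ℝ) < 1)).const_mul (1/4 : ℝ)
        simpa using this)
    have := ge_of_tendsto ht (Filter.Eventually.of_forall fun n => hstep n v hv)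
    simpa using this
  calc ‖ω v - a v‖ ≤ min (ε/2) (1/8 : ℝ) := hlim
    _ ≤ ε/2 := min_le_left _ _
    _ < ε := half_lt_self hε
end
end

section
/- Let G and H be topological abelian groups and ω: G → H a quasi-homomorphism (ω(0) = 0 and (x,y) ↦ ω(x+y) − ω(x) − ω(y) is continuous at (0,0)). Then the sets W(V,U) = {(h,g) ∈ H × G : g ∈ U, h ∈ ω(g) + V}, for U a neighborhood of 0 in G and V a neighborhood of 0 in H, form a basis of neighborhoods of (0,0) for a group topology on H × G. -/
open Filter Topology Pointwise

/-- `W(V,U) = {(h,g) ∈ H × G : g ∈ U, h ∈ ω(g) + V}`. -/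
def Wset {G H : Type*} [AddCommGroup G] [AddCommGroup H] (ω : G → H)
    (V : Set H) (U : Set G) : Set (H × G) :=
  {p | p.2 ∈ U ∧ p.1 - ω p.2 ∈ V}

private lemma half_aux {α : Type*} [AddCommGroup α] [TopologicalSpace α]
    [IsTopologicalAddGroup α] (U : Set α) (hU : U ∈ nhds (0 : α)) :
    ∃ W ∈ nhds (0 : α), ∀ a ∈ W, ∀ b ∈ W, a + b ∈ U := by
  have hc : Filter.Tendsto (fun p : α × α => p.1 + p.2) (nhds (0, 0)) (nhds 0) := by
    simpa using (continuous_add (M := α)).tendsto ((0 : α), (0 : α))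
  have h2 := hc hU
  rw [nhds_prod_eq, Filter.mem_map, Filter.mem_prod_iff] at h2
  obtain ⟨A, hA, Bs, hBs, hsub⟩ := h2
  exact ⟨A ∩ Bs, Filter.inter_mem hA hBs,
    fun a ha b hb => hsub (Set.mk_mem_prod ha.1 hb.2)⟩

private lemma negmem_aux {α : Type*} [AddCommGroup α] [TopologicalSpace α]
    [IsTopologicalAddGroup α] (U : Set α) (hU : U ∈ nhds (0 : α)) :
    (fun x : α => -x) ⁻¹' U ∈ nhds (0 : α) := by
  have h1 : Filter.Tendsto (fun x : α => -x) (nhds (0 : α)) (nhds 0) := by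
    simpa using (continuous_neg (G := α)).tendsto (0 : α)
  exact h1 hU

theorem stmt11 {G H : Type*} [AddCommGroup G] [TopologicalSpace G] [IsTopologicalAddGroup G]
    [AddCommGroup H] [TopologicalSpace H] [IsTopologicalAddGroup H]
    (ω : G → H) (hω0 : ω 0 = 0)
    (hq : ContinuousAt (fun p : G × G => ω (p.1 + p.2) - ω p.1 - ω p.2) (0, 0)) :
    ∃ τ : TopologicalSpace (H × G), @IsTopologicalAddGroup (H × G) τ _ ∧
      (@nhds (H × G) τ 0).HasBasis
        (fun p : Set H × Set G => p.1 ∈ nhds (0 : H) ∧ p.2 ∈ nhds (0 : G))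
        (fun p => Wset ω p.1 p.2) := by
  classical
  set d : G × G → H := fun p => ω (p.1 + p.2) - ω p.1 - ω p.2 with hd
  have hd0 : Tendsto d (𝓝 0) (𝓝 0) := by
    have h1 : d 0 = 0 := by simp [hd, hω0]
    simpa [ContinuousAt, h1] using (show ContinuousAt d 0 from hq)
  have key : ∀ V ∈ 𝓝 (0 : H), ∃ U ∈ 𝓝 (0 : G), ∀ x ∈ U, ∀ y ∈ U, d (x, y) ∈ V := by
    intro V hV
    have h2 := hd0 hV
    rw [show ((0 : G × G)) = ((0 : G), (0 : G)) from rfl, nhds_prod_eq,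
      Filter.mem_map, Filter.mem_prod_iff] at h2
    obtain ⟨U₁, hU₁, U₂, hU₂, h⟩ := h2
    refine ⟨U₁ ∩ U₂, Filter.inter_mem hU₁ hU₂, fun x hx y hy => ?_⟩
    exact h (Set.mk_mem_prod hx.1 hy.2)
  set S : Set (Set (H × G)) :=
    {s | ∃ V ∈ 𝓝 (0 : H), ∃ U ∈ 𝓝 (0 : G), s = Wset ω V U} with hS
  have hne : S.Nonempty :=
    ⟨Wset ω Set.univ Set.univ, Set.univ, Filter.univ_mem, Set.univ, Filter.univ_mem, rfl⟩
  have hinter : ∀ x y, x ∈ S → y ∈ S → ∃ z ∈ S, z ⊆ x ∩ y := by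
    rintro _ _ ⟨V, hV, U, hU, rfl⟩ ⟨V', hV', U', hU', rfl⟩
    refine ⟨Wset ω (V ∩ V') (U ∩ U'),
      ⟨V ∩ V', Filter.inter_mem hV hV', U ∩ U', Filter.inter_mem hU hU', rfl⟩, ?_⟩
    rintro ⟨h, g⟩ ⟨⟨hg, hg'⟩, hh, hh'⟩
    exact ⟨⟨hg, hh⟩, hg', hh'⟩
  have hzero : ∀ U ∈ S, (0 : H × G) ∈ U := by
    rintro _ ⟨V, hV, U, hU, rfl⟩
    exact ⟨mem_of_mem_nhds hU, by simpa [hω0] using mem_of_mem_nhds hV⟩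
  have hadd : ∀ U ∈ S, ∃ V ∈ S, V + V ⊆ U := by
    rintro _ ⟨V, hV, U, hU, rfl⟩
    obtain ⟨V₁, hV₁, hV₁sub⟩ : ∃ V₁ ∈ 𝓝 (0 : H), ∀ a ∈ V₁, ∀ b ∈ V₁, ∀ c ∈ V₁,
        a + b - c ∈ V := by
      obtain ⟨V₂, hV₂, hV₂sub⟩ := half_aux (α := H) V hV
      obtain ⟨V₃, hV₃, hV₃sub⟩ := half_aux (α := H) V₂ hV₂
      refine ⟨V₃ ∩ (fun x : H => -x) ⁻¹' V₂, Filter.inter_mem hV₃ (negmem_aux (α := H) V₂ hV₂),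
        fun a ha b hb c hc2 => ?_⟩
      have : a + b - c = (a + b) + (-c) := by abel
      rw [this]
      exact hV₂sub _ (hV₃sub a ha.1 b hb.1) _ hc2.2
    obtain ⟨U₁, hU₁, hU₁d⟩ := key V₁ hV₁
    obtain ⟨U₂, hU₂, hU₂sub⟩ := half_aux (α := G) U hU
    refine ⟨Wset ω V₁ (U₁ ∩ U₂), ⟨V₁, hV₁, U₁ ∩ U₂, Filter.inter_mem hU₁ hU₂, rfl⟩, ?_⟩
    rintro p ⟨⟨h, g⟩, ⟨hg, hh⟩, ⟨h', g'⟩, ⟨hg', hh'⟩, rfl⟩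
    refine ⟨hU₂sub g hg.2 g' hg'.2, ?_⟩
    show (h + h') - ω (g + g') ∈ V
    have heq : (h + h') - ω (g + g') = (h - ω g) + (h' - ω g') - d (g, g') := by
      simp only [hd]; abel
    rw [heq]
    exact hV₁sub _ hh _ hh' _ (hU₁d g hg.1 g' hg'.1)
  have hneg : ∀ U ∈ S, ∃ V ∈ S, V ⊆ (fun x : H × G => -x) ⁻¹' U := by
    rintro _ ⟨V, hV, U, hU, rfl⟩
    obtain ⟨V₁, hV₁, hV₁sub⟩ : ∃ V₁ ∈ 𝓝 (0 : H), ∀ a ∈ V₁, ∀ b ∈ V₁, -a + b ∈ V := by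
      obtain ⟨V₂, hV₂, hV₂sub⟩ := half_aux (α := H) V hV
      refine ⟨V₂ ∩ (fun x : H => -x) ⁻¹' V₂, Filter.inter_mem hV₂ (negmem_aux (α := H) V₂ hV₂),
        fun a ha b hb => ?_⟩
      exact hV₂sub _ ha.2 _ hb.1
    obtain ⟨U₂, hU₂, hU₂d⟩ : ∃ U₂ ∈ 𝓝 (0 : G), ∀ g ∈ U₂, d (g, -g) ∈ V₁ := by
      have h1 : Tendsto (fun g : G => ((g, -g) : G × G)) (𝓝 0) (𝓝 0) := by
        have hcc : Continuous (fun g : G => ((g, -g) : G × G)) :=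
          continuous_id.prodMk continuous_neg
        simpa [Prod.zero_eq_mk] using hcc.tendsto (0 : G)
      have hcont : Tendsto (fun g : G => d (g, -g)) (𝓝 0) (𝓝 0) := hd0.comp h1
      exact ⟨_, hcont hV₁, fun g hg => hg⟩
    refine ⟨Wset ω V₁ (U₂ ∩ (fun g : G => -g) ⁻¹' U),
      ⟨V₁, hV₁, _, Filter.inter_mem hU₂ (negmem_aux (α := G) U hU), rfl⟩, ?_⟩
    rintro ⟨h, g⟩ ⟨hg, hh⟩
    refine ⟨hg.2, ?_⟩
    show -h - ω (-g) ∈ V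
    have heq : -h - ω (-g) = -(h - ω g) + d (g, -g) := by
      simp only [hd]
      rw [show g + -g = 0 by abel, hω0]
      abel
    rw [heq]
    exact hV₁sub _ hh _ (hU₂d g hg.1)
  let B : AddGroupFilterBasis (H × G) :=
    addGroupFilterBasisOfComm S hne hinter hzero hadd hneg
  refine ⟨B.topology, B.isTopologicalAddGroup, ?_⟩
  have hb := B.nhds_zero_hasBasis
  refine hb.to_hasBasis ?_ ?_
  · intro s hs
    have hs' : s ∈ S := hs
    obtain ⟨V, hV, U, hU, rfl⟩ := hs'
    exact ⟨(V, U), ⟨hV, hU⟩, le_refl _⟩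
  · rintro ⟨V, U⟩ ⟨hV, hU⟩
    refine ⟨Wset ω V U, ?_, le_refl _⟩
    show Wset ω V U ∈ S
    exact ⟨V, hV, U, hU, rfl⟩
end

section
/- Let G, H be topological abelian groups and ω: G → H a quasi-homomorphism. Then the canonical inclusion ι_H: H → H ⊕_ω G, h ↦ (h, 0), is a topological embedding, and the canonical projection π_G: H ⊕_ω G → G, (h,g) ↦ g, is continuous, open, and surjective with kernel ι_H(H). -/
open Filter Topology

theorem stmt13 {G H : Type*} [AddCommGroup G] [TopologicalSpace G] [IsTopologicalAddGroup G]
    [AddCommGroup H] [TopologicalSpace H] [IsTopologicalAddGroup H]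
    (ω : G → H) (hω0 : ω 0 = 0)
    (hq : ContinuousAt (fun p : G × G => ω (p.1 + p.2) - ω p.1 - ω p.2) (0, 0))
    (τ : TopologicalSpace (H × G)) (hgrp : @IsTopologicalAddGroup (H × G) τ _)
    (hbasis : (@nhds (H × G) τ 0).HasBasis
      (fun p : Set H × Set G => p.1 ∈ nhds (0 : H) ∧ p.2 ∈ nhds (0 : G))
      (fun p => Wset ω p.1 p.2)) :
    @Topology.IsEmbedding H (H × G) _ τ (fun h => (h, 0)) ∧
      @Continuous (H × G) G τ _ Prod.snd ∧
      @IsOpenMap (H × G) G τ _ Prod.snd ∧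
      Function.Surjective (Prod.snd : H × G → G) ∧
      {p : H × G | p.2 = 0} = Set.range (fun h : H => ((h, 0) : H × G)) := by
  set n0 : Filter (H × G) := @nhds (H × G) τ 0 with hn0
  set ι : H → H × G := fun h => ((h, 0) : H × G) with hι
  have hpre : ∀ V : Set H, ∀ U : Set G, (0 : G) ∈ U → ι ⁻¹' Wset ω V U = V := by
    intro V U hU
    ext h
    simp [Wset, hι, hω0, hU]
  -- comap ι n0 = 𝓝 0 in H
  have hcomap : Filter.comap ι n0 = 𝓝 (0 : H) := by
    apply le_antisymm
    · intro V hV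
      exact mem_comap.2 ⟨Wset ω V Set.univ,
        hbasis.mem_of_mem (i := (V, Set.univ)) ⟨hV, univ_mem⟩,
        by rw [hpre V Set.univ trivial]⟩
    · intro s hs
      rcases mem_comap.1 hs with ⟨t, ht, hsub⟩
      rcases hbasis.mem_iff.mp ht with ⟨⟨V, U⟩, ⟨hV, hU⟩, htsub⟩
      refine mem_of_superset ?_ (Set.Subset.trans (Set.preimage_mono htsub) hsub)
      rw [hpre V U (mem_of_mem_nhds hU)]; exact hV
  -- map snd n0 = 𝓝 0 in G
  have hmap : Filter.map (Prod.snd : H × G → G) n0 = 𝓝 (0 : G) := by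
    apply le_antisymm
    · intro U hU
      refine mem_map.2 (mem_of_superset (hbasis.mem_of_mem (i := (Set.univ, U))
        ⟨univ_mem, hU⟩) ?_)
      intro p hp; exact hp.1
    · intro s hs
      rcases hbasis.mem_iff.mp (mem_map.1 hs) with ⟨⟨V, U⟩, ⟨hV, hU⟩, htsub⟩
      refine mem_of_superset hU ?_
      intro g hg
      have : ((ω g, g) : H × G) ∈ Wset ω V U := ⟨hg, by simpa using mem_of_mem_nhds hV⟩
      exact htsub this
  -- continuity of snd
  have hcont : @Continuous (H × G) G τ _ Prod.snd := by
    refine @continuous_of_continuousAt_zero (H × G) τ _ hgrp G ((H × G) →+ G) _ _ _ _ _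
      (AddMonoidHom.snd H G) ?_
    exact hmap.le
  -- openness of snd
  have hopen : @IsOpenMap (H × G) G τ _ Prod.snd := by
    refine @IsOpenMap.of_nhds_le (H × G) G Prod.snd τ _ (fun a => ?_)
    have h1 : @nhds (H × G) τ a = Filter.map (a + ·) n0 := by
      rw [hn0, @map_add_left_nhds_zero (H × G) τ _ hgrp a]
    rw [h1, Filter.map_map]
    have h2 : (Prod.snd ∘ (a + ·) : H × G → G) = (a.2 + ·) ∘ Prod.snd := rfl
    rw [h2, ← Filter.map_map, hmap, map_add_left_nhds_zero]
  refine ⟨?_, hcont, hopen, fun g => ⟨(0, g), rfl⟩, ?_⟩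
  · refine ⟨@Topology.isInducing_iff_nhds H (H × G) ι τ _ |>.2 fun h => ?_, fun a b hab => ?_⟩
    · have h1 : @nhds (H × G) τ (ι h) = Filter.comap (· + -(ι h)) n0 := by
        rw [hn0, (@nhds_translation_add_neg (H × G) τ _ hgrp (ι h)).symm]
      rw [h1, Filter.comap_comap]
      have h2 : ((· + -(ι h)) ∘ ι : H → H × G) = ι ∘ (· + -h) := by
        funext x; simp [hι, Prod.ext_iff]
      rw [h2, ← Filter.comap_comap, hcomap, nhds_translation_add_neg]
    · simpa [hι, Prod.ext_iff] using hab
  · ext p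
    constructor
    · intro hp
      exact ⟨p.1, by ext <;> simp [hι, hp.symm]⟩
    · rintro ⟨h, rfl⟩; rfl
end

section
/- Let G, H be topological abelian groups and ω: G → H a quasi-homomorphism. The twisted sum 0 → H → H ⊕_ω G → G → 0 splits (i.e., the projection π_G admits a continuous homomorphic right inverse) if and only if ω is approximable (i.e., there is a homomorphism a: G → H with ω − a continuous at 0). -/
theorem stmt14 {G H : Type*} [AddCommGroup G] [TopologicalSpace G] [IsTopologicalAddGroup G]
    [AddCommGroup H] [TopologicalSpace H] [IsTopologicalAddGroup H]
    (ω : G → H) (hω0 : ω 0 = 0)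
    (hq : ContinuousAt (fun p : G × G => ω (p.1 + p.2) - ω p.1 - ω p.2) (0, 0))
    (τ : TopologicalSpace (H × G)) (hgrp : @IsTopologicalAddGroup (H × G) τ _)
    (hbasis : (@nhds (H × G) τ 0).HasBasis
      (fun p : Set H × Set G => p.1 ∈ nhds (0 : H) ∧ p.2 ∈ nhds (0 : G))
      (fun p => Wset ω p.1 p.2)) :
    (∃ S : G →+ H × G, @Continuous G (H × G) _ τ ⇑S ∧ ∀ g, (S g).2 = g) ↔
      (∃ a : G →+ H, Filter.Tendsto (fun g => ω g - a g) (nhds 0) (nhds (0 : H))) := by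
  constructor
  · rintro ⟨S, hScont, hSsec⟩
    refine ⟨(AddMonoidHom.fst H G).comp S, ?_⟩
    have h0 : Filter.Tendsto (⇑S) (nhds 0) (@nhds (H × G) τ 0) := by
      have := hScont.tendsto 0
      rwa [map_zero] at this
    have key : Filter.Tendsto (fun g => (S g).1 - ω g) (nhds 0) (nhds (0 : H)) := by
      intro V hV
      rw [Filter.mem_map]
      have hW : Wset ω V Set.univ ∈ @nhds (H × G) τ 0 :=
        hbasis.mem_of_mem (i := (V, Set.univ)) ⟨hV, Filter.univ_mem⟩
      have := h0 hW
      rw [Filter.mem_map] at this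
      refine Filter.mem_of_superset this ?_
      intro g hg
      have : (S g).1 - ω ((S g).2) ∈ V := hg.2
      rwa [hSsec g] at this
    have := key.neg
    simpa [neg_sub] using this
  · rintro ⟨a, ha⟩
    letI : TopologicalSpace (H × G) := τ
    haveI := hgrp
    refine ⟨(a.prod (AddMonoidHom.id G)), ?_, fun g => rfl⟩
    have hc0 : ContinuousAt (fun g : G => ((a g, g) : H × G)) 0 := by
      have hS0 : ((fun g : G => ((a g, g) : H × G)) 0) = 0 := by simp
      unfold ContinuousAt
      rw [hS0, hbasis.tendsto_right_iff]
      rintro ⟨V, U⟩ ⟨hV, hU⟩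
      have h1 : ∀ᶠ g in nhds (0 : G), g ∈ U := hU
      have h2 : ∀ᶠ g in nhds (0 : G), a g - ω g ∈ V := by
        have h := ha.neg
        rw [neg_zero] at h
        simp only [neg_sub] at h
        exact h hV
      filter_upwards [h1, h2] with g hg1 hg2
      exact ⟨hg1, hg2⟩
    exact continuous_of_continuousAt_zero (a.prod (AddMonoidHom.id G)) hc0
end

section
/- Suppose G is a topological abelian group containing an open subgroup A with the property that every short exact sequence 0 → 𝕋 → X → A → 0 of topological abelian groups splits. Then every short exact sequence 0 → 𝕋 → X → G → 0 of topological abelian groups splits. -/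
noncomputable section

universe u

theorem stmt15 {G : Type u} [AddCommGroup G] [TopologicalSpace G] [IsTopologicalAddGroup G]
    (A : AddSubgroup G) (hA : IsOpen (A : Set G))
    (hsplit : ∀ (X : Type u) [AddCommGroup X] [TopologicalSpace X] [IsTopologicalAddGroup X]
      (j : 𝕋 →+ X) (π : X →+ A),
      Topology.IsEmbedding ⇑j → (∀ x, π x = 0 ↔ x ∈ Set.range ⇑j) →
      Continuous π → IsOpenMap π → Function.Surjective π →
      ∃ S : A →+ X, Continuous S ∧ ∀ a : A, π (S a) = a)
    (X : Type u) [AddCommGroup X] [TopologicalSpace X] [IsTopologicalAddGroup X]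
    (j : 𝕋 →+ X) (π : X →+ G)
    (hj : Topology.IsEmbedding ⇑j) (hker : ∀ x, π x = 0 ↔ x ∈ Set.range ⇑j)
    (hπc : Continuous π) (hπo : IsOpenMap π) (hπs : Function.Surjective π) :
    ∃ S : G →+ X, Continuous S ∧ ∀ g, π (S g) = g := by
  classical
  -- the open subgroup `Y = π⁻¹(A)` of `X`
  set Y : AddSubgroup X := A.comap π with hYdef
  have hYopen : IsOpen (Y : Set X) := hA.preimage hπc
  -- the restricted projection `π' : Y →+ A`
  let π' : Y →+ A := (π.domRestrict Y).codRestrict A (fun y => y.2)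
  have hπ'val : ∀ y : Y, (π' y : G) = π (y : X) := fun y => rfl
  have hπ'c : Continuous π' := Continuous.subtype_mk (hπc.comp continuous_subtype_val) _
  have hπ'o : IsOpenMap π' := by
    intro U hU
    have hUX : IsOpen (Subtype.val '' U) := hYopen.isOpenMap_subtype_val U hU
    have hGA : IsOpen (π '' (Subtype.val '' U)) := hπo _ hUX
    have : (⇑π' '' U) = Subtype.val ⁻¹' (π '' (Subtype.val '' U)) := by
      ext a
      constructor
      · rintro ⟨y, hy, rfl⟩
        exact ⟨(y : X), ⟨y, hy, rfl⟩, rfl⟩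
      · rintro ⟨x, ⟨y, hy, rfl⟩, hx⟩
        exact ⟨y, hy, Subtype.ext hx⟩
    rw [this]
    exact hGA.preimage continuous_subtype_val
  have hπ's : Function.Surjective π' := by
    rintro ⟨a, ha⟩
    obtain ⟨x, hx⟩ := hπs a
    exact ⟨⟨x, by simpa [hYdef, AddSubgroup.mem_comap, hx] using ha⟩, Subtype.ext hx⟩
  -- the restricted inclusion `j' : 𝕋 →+ Y`
  have hjY : ∀ t, j t ∈ Y := fun t => by
    have : π (j t) = 0 := (hker (j t)).2 ⟨t, rfl⟩
    simp [hYdef, AddSubgroup.mem_comap, this, A.zero_mem]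
  let j' : 𝕋 →+ Y := j.codRestrict Y hjY
  have hj'val : ∀ t, ((j' t : X)) = j t := fun _ => rfl
  have hj'c : Continuous j' := Continuous.subtype_mk hj.continuous _
  have hj' : Topology.IsEmbedding ⇑j' :=
    Topology.IsEmbedding.of_comp hj'c continuous_subtype_val hj
  have hj'inj : Function.Injective ⇑j' := hj'.injective
  have hker' : ∀ y : Y, π' y = 0 ↔ y ∈ Set.range ⇑j' := by
    intro y
    constructor
    · intro h
      have : π (y : X) = 0 := by
        have := congrArg (Subtype.val) h
        simpa [hπ'val] using this
      obtain ⟨t, ht⟩ := (hker _).1 this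
      exact ⟨t, Subtype.ext ht⟩
    · rintro ⟨t, rfl⟩
      apply Subtype.ext
      simpa [hπ'val, hj'val] using (hker (j t)).2 ⟨t, rfl⟩
  -- apply the splitting hypothesis over `A`
  obtain ⟨S₀, hS₀c, hS₀⟩ := hsplit Y j' π' hj' hker' hπ'c hπ'o hπ's
  -- construct the character `χ₀ : Y →+ 𝕋` with `χ₀ ∘ j' = id`
  have hex : ∀ y : Y, ∃ t : 𝕋, j' t = y - S₀ (π' y) := by
    intro y
    refine (hker' _).1 ?_
    simp [map_sub, hS₀]
  let f : Y → 𝕋 := fun y => (hex y).choose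
  have hf : ∀ y : Y, j' (f y) = y - S₀ (π' y) := fun y => (hex y).choose_spec
  let χ₀ : Y →+ 𝕋 :=
    { toFun := f
      map_zero' := hj'inj (by simp [hf])
      map_add' := fun a b => hj'inj (by simp [hf, map_add]; abel) }
  have hχ₀ : ∀ y : Y, j' (χ₀ y) = y - S₀ (π' y) := hf
  have hχ₀c : Continuous χ₀ := by
    rw [hj'.continuous_iff]
    have : (⇑j' ∘ ⇑χ₀) = fun y => y - S₀ (π' y) := funext hχ₀
    rw [this]
    exact continuous_id.sub (hS₀c.comp hπ'c)
  have hχ₀j : ∀ t, χ₀ (j' t) = t := by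
    intro t
    apply hj'inj
    rw [hχ₀]
    have : π' (j' t) = 0 := (hker' _).2 ⟨t, rfl⟩
    simp [this]
  -- extend `χ₀` to `χ : X →+ 𝕋` using divisibility of `𝕋`
  obtain ⟨χ, hχ⟩ := (Module.Baer.of_divisible 𝕋).extension_property_addMonoidHom
    Y.subtype Subtype.val_injective χ₀
  have hχval : ∀ y : Y, χ (y : X) = χ₀ y := fun y => DFunLike.congr_fun hχ y
  have hχon : ContinuousOn χ (Y : Set X) := by
    rw [continuousOn_iff_continuous_restrict]
    have : (Y : Set X).domRestrict ⇑χ = ⇑χ₀ := funext fun y => hχval y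
    rw [this]
    exact hχ₀c
  have hχc : Continuous χ :=
    continuous_of_continuousAt_zero χ (hχon.continuousAt (hYopen.mem_nhds Y.zero_mem))
  have hχj : ∀ t, χ (j t) = t := fun t => by
    have := hχval (j' t)
    rw [hj'val] at this
    rw [this, hχ₀j]
  -- the retraction `ρ : X →+ X`, `ρ x = x - j (χ x)`
  let ρ : X →+ X := AddMonoidHom.id X - j.comp χ
  have hρ : ∀ x, ρ x = x - j (χ x) := fun _ => rfl
  have hρc : Continuous ρ := by
    have : ⇑ρ = fun x => x - j (χ x) := rfl
    rw [this]
    exact continuous_id.sub (hj.continuous.comp hχc)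
  have hπρ : ∀ x, π (ρ x) = π x := by
    intro x
    have h0 : π (j (χ x)) = 0 := (hker _).2 ⟨χ x, rfl⟩
    simp [hρ, map_sub, h0]
  -- `ρ` only depends on `π x`
  have hwd : ∀ x x', π x = π x' → ρ x = ρ x' := by
    intro x x' h
    have hker0 : π (x - x') = 0 := by simp [map_sub, h]
    obtain ⟨t, ht⟩ := (hker _).1 hker0
    have : ρ (x - x') = 0 := by
      rw [hρ, ← ht, hχj]
      abel
    have := (map_sub ρ x x') ▸ this
    rwa [sub_eq_zero] at this
  -- define the section `S : G →+ X`
  let s : G → X := fun g => ρ (hπs g).choose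
  have hs : ∀ g, π (s g) = g := fun g => by
    rw [hπρ]; exact (hπs g).choose_spec
  have hsπ : ∀ x, s (π x) = ρ x := fun x => hwd _ _ ((hπs (π x)).choose_spec)
  let S : G →+ X :=
    { toFun := s
      map_zero' := by
        have : s (π 0) = ρ 0 := hsπ 0
        simpa using this
      map_add' := fun a b => by
        obtain ⟨x, hx⟩ := hπs a
        obtain ⟨y, hy⟩ := hπs b
        have h1 : s (a + b) = ρ (x + y) := by
          rw [← hx, ← hy, ← map_add, hsπ]
        have h2 : s a = ρ x := by rw [← hx, hsπ]
        have h3 : s b = ρ y := by rw [← hy, hsπ]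
        show s (a + b) = s a + s b
        rw [h1, h2, h3, map_add] }
  have hSc : Continuous S := by
    have hq : Topology.IsQuotientMap ⇑π := hπo.isQuotientMap hπc hπs
    rw [hq.continuous_iff]
    have : (⇑S ∘ ⇑π) = ⇑ρ := funext hsπ
    rw [this]
    exact hρc
  exact ⟨S, hSc, hs⟩
end
end

section
/- Let (G_α)_{α∈I} be a family of topological abelian groups such that for each α every short exact sequence 0 → 𝕋 → X → G_α → 0 of topological abelian groups splits. Then every short exact sequence 0 → 𝕋 → X → ⊕_{α∈I} G_α → 0 splits, where the direct sum carries the coproduct (finest) group topology making all inclusions continuous. -/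
noncomputable section

universe u v

theorem stmt18 {I : Type v} [DecidableEq I] (G : I → Type u)
    [∀ i, AddCommGroup (G i)] [∀ i, TopologicalSpace (G i)] [∀ i, IsTopologicalAddGroup (G i)]
    (τ : TopologicalSpace (DirectSum I G)) (hτgrp : @IsTopologicalAddGroup (DirectSum I G) τ _)
    (hincl : ∀ i, @Continuous (G i) (DirectSum I G) _ τ ⇑(DirectSum.of G i))
    (huniv : ∀ (Y : Type u) [AddCommGroup Y] [TopologicalSpace Y] [IsTopologicalAddGroup Y]
      (f : (DirectSum I G) →+ Y), (∀ i, Continuous ⇑(f.comp (DirectSum.of G i))) →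
      @Continuous (DirectSum I G) Y τ _ ⇑f)
    (hsplit : ∀ i, ∀ (X : Type u) [AddCommGroup X] [TopologicalSpace X] [IsTopologicalAddGroup X]
      (j : 𝕋 →+ X) (p : X →+ G i),
      Topology.IsEmbedding ⇑j → (∀ x, p x = 0 ↔ x ∈ Set.range ⇑j) →
      Continuous p → IsOpenMap p → Function.Surjective p →
      ∃ S : G i →+ X, Continuous S ∧ ∀ g, p (S g) = g)
    (X : Type u) [AddCommGroup X] [TopologicalSpace X] [IsTopologicalAddGroup X]
    (j : 𝕋 →+ X) (π : X →+ (DirectSum I G))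
    (hj : Topology.IsEmbedding ⇑j) (hker : ∀ x, π x = 0 ↔ x ∈ Set.range ⇑j)
    (hπc : @Continuous X (DirectSum I G) _ τ ⇑π) (hπo : @IsOpenMap X (DirectSum I G) _ τ ⇑π)
    (hπs : Function.Surjective ⇑π) :
    ∃ S : (DirectSum I G) →+ X, @Continuous (DirectSum I G) X τ _ ⇑S ∧ ∀ g, π (S g) = g := by
  letI : TopologicalSpace (DirectSum I G) := τ
  haveI := hτgrp
  -- Step 1: for each i, produce a continuous section over G i via pullback
  have key : ∀ i, ∃ s : G i →+ X, Continuous s ∧ ∀ g, π (s g) = DirectSum.of G i g := by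
    intro i
    -- pullback subgroup
    set φ : X × G i →+ DirectSum I G :=
      (π.comp (AddMonoidHom.fst X (G i))) -
        ((DirectSum.of G i).comp (AddMonoidHom.snd X (G i))) with hφ
    set P : AddSubgroup (X × G i) := φ.ker with hP
    have hmem : ∀ q : X × G i, q ∈ P ↔ π q.1 = DirectSum.of G i q.2 := by
      intro q
      simp [hP, hφ, AddMonoidHom.mem_ker, sub_eq_zero]
    -- projection to G i
    set p : P →+ G i := (AddMonoidHom.snd X (G i)).comp P.subtype with hp
    have hpapply : ∀ q : P, p q = (q : X × G i).2 := fun q => rfl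
    -- inclusion of 𝕋
    have hjmem : ∀ t : 𝕋, (j.prod 0) t ∈ P := by
      intro t
      rw [hmem]
      simp only [AddMonoidHom.prod_apply, AddMonoidHom.zero_apply, map_zero]
      exact (hker (j t)).mpr ⟨t, rfl⟩
    set jP : 𝕋 →+ P := (j.prod 0).codRestrict P hjmem with hjP
    have hjPapply : ∀ t, ((jP t : X × G i)) = (j t, 0) := fun t => rfl
    -- continuity facts
    have hcval : Continuous ((↑) : P → X × G i) := continuous_subtype_val
    have hjPc : Continuous jP := by
      apply Continuous.subtype_mk
      exact hj.continuous.prodMk continuous_const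
    have hemb : Topology.IsEmbedding ⇑jP := by
      apply Topology.IsEmbedding.of_comp hjPc (continuous_fst.comp hcval)
      exact hj
    have hkerP : ∀ q : P, p q = 0 ↔ q ∈ Set.range ⇑jP := by
      intro q
      constructor
      · intro h
        have h2 : (q : X × G i).2 = 0 := h
        have h1 : π (q : X × G i).1 = 0 := by
          have := (hmem _).mp q.2
          rw [h2, map_zero] at this
          exact this
        obtain ⟨t, ht⟩ := (hker _).mp h1
        exact ⟨t, Subtype.ext (Prod.ext ht h2.symm)⟩
      · rintro ⟨t, rfl⟩
        exact rfl
    have hpc : Continuous p := continuous_snd.comp hcval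
    have hpo : IsOpenMap p := by
      intro U hU
      obtain ⟨W, hW, hWU⟩ := isOpen_induced_iff.mp hU
      rw [isOpen_iff_mem_nhds]
      rintro g ⟨q, hqU, rfl⟩
      have hqW : (q : X × G i) ∈ W := by rw [← hWU] at hqU; exact hqU
      obtain ⟨U₀, V₀, hU₀, hV₀, hq1, hq2, hsub⟩ := isOpen_prod_iff.mp hW _ _ hqW
      have hopen : IsOpen (V₀ ∩ (DirectSum.of G i) ⁻¹' (π '' U₀)) :=
        hV₀.inter ((hπo U₀ hU₀).preimage (hincl i))
      apply Filter.mem_of_superset (hopen.mem_nhds ?_)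
      · rintro g' ⟨hg'V, x', hx'U, hx'⟩
        refine ⟨⟨(x', g'), (hmem _).mpr hx'⟩, ?_, rfl⟩
        rw [← hWU]
        exact hsub ⟨hx'U, hg'V⟩
      · refine ⟨hq2, ⟨(q : X × G i).1, hq1, ?_⟩⟩
        exact (hmem _).mp q.2
    have hps : Function.Surjective ⇑p := by
      intro g
      obtain ⟨x, hx⟩ := hπs (DirectSum.of G i g)
      exact ⟨⟨(x, g), (hmem _).mpr hx⟩, rfl⟩
    obtain ⟨S, hSc, hSp⟩ := hsplit i P jP p hemb hkerP hpc hpo hps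
    refine ⟨(AddMonoidHom.fst X (G i)).comp (P.subtype.comp S), ?_, ?_⟩
    · exact continuous_fst.comp (hcval.comp hSc)
    · intro g
      have h1 := (hmem _).mp (S g).2
      have h2 : ((S g : X × G i)).2 = g := hSp g
      simpa [h2] using h1
  choose s hs1 hs2 using key
  refine ⟨DirectSum.toAddMonoid s, ?_, ?_⟩
  · apply huniv
    intro i
    have : ((DirectSum.toAddMonoid s).comp (DirectSum.of G i)) = s i := by
      ext g
      simp [DirectSum.toAddMonoid_of]
    rw [this]
    exact hs1 i
  · have : π.comp (DirectSum.toAddMonoid s) = AddMonoidHom.id (DirectSum I G) := by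
      refine DirectSum.addHom_ext fun i g => ?_
      simp [DirectSum.toAddMonoid_of, hs2]
    intro g
    exact DFunLike.congr_fun this g
end
end
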